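/- Let f : ℤ^n → ℝ ∪ {∞} satisfy f(x + 𝟙_n) = f(x) + r for some constant r, and suppose f(x) + f(y) ≥ f(x ∧ y) + f(x ∨ y) for all x, y. Then f(x) + f(y) ≥ f(⌊(x+y)/2⌋) + f(⌈(x+y)/2⌉) for all x, y ∈ ℤ^n. -/

import Mathlib

/-- If f : ℤ^n → ℝ ∪ {∞} satisfies f(x+𝟙) = f(x) + r and is submodular
(f(x) + f(y) ≥ f(x∧y) + f(x∨y)), then it satisfies discrete midpoint convexity:
f(x) + f(y) ≥ f(⌊(x+y)/2⌋) + f(⌈(x+y)/2⌉). -/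
theorem stmt10 (n : ℕ) (f : (Fin n → ℤ) → WithTop ℝ) (r : ℝ)
    (hr : ∀ x : Fin n → ℤ, f (x + fun _ => 1) = f x + (r : WithTop ℝ))
    (hsub : ∀ x y : Fin n → ℤ, f (x ⊓ y) + f (x ⊔ y) ≤ f x + f y) :
    ∀ x y : Fin n → ℤ,
      f (fun i => (x i + y i) / 2) + f (fun i => -((-(x i + y i)) / 2)) ≤ f x + f y := by
  have key : ∀ x y : Fin n → ℤ,
      f (x ⊓ (y + fun _ => 1)) + f ((x - fun _ => 1) ⊔ y) ≤ f x + f y := by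
    intro x y
    have h1 := hsub x (y + fun _ => 1)
    have h2 : x ⊔ (y + fun _ => 1) = ((x - fun _ => 1) ⊔ y) + fun _ => 1 := by
      funext i
      simp only [Pi.sup_apply, Pi.add_apply, Pi.sub_apply, max_def]
      split_ifs <;> omega
    rw [hr y, h2, hr ((x - fun _ => 1) ⊔ y)] at h1
    rw [← add_assoc, ← add_assoc] at h1
    exact (WithTop.add_le_add_iff_right (by simp)).mp h1
  have main : ∀ N : ℕ, ∀ x y : Fin n → ℤ,
      (∀ i, x i - y i ≤ (N : ℤ) ∧ y i - x i ≤ (N : ℤ)) →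
      f (fun i => (x i + y i) / 2) + f (fun i => -((-(x i + y i)) / 2)) ≤ f x + f y := by
    intro N
    induction N using Nat.strong_induction_on with
    | _ N ih =>
      intro x y hb
      by_cases hN : N ≤ 1
      · have h1 : (fun i => (x i + y i) / 2) = x ⊓ y := by
          funext i
          have h := hb i
          have hN1 : (N : ℤ) ≤ 1 := by exact_mod_cast hN
          simp only [Pi.inf_apply, min_def]
          split_ifs <;> omega
        have h2 : (fun i => -((-(x i + y i)) / 2)) = x ⊔ y := by
          funext i
          have h := hb i
          have hN1 : (N : ℤ) ≤ 1 := by exact_mod_cast hN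
          simp only [Pi.sup_apply, max_def]
          split_ifs <;> omega
        rw [h1, h2]; exact hsub x y
      · push_neg at hN
        set x1 : Fin n → ℤ := x ⊓ (y + fun _ => 1) with hx1
        set y1 : Fin n → ℤ := (x - fun _ => 1) ⊔ y with hy1
        set y2 : Fin n → ℤ := y1 ⊓ (x1 + fun _ => 1) with hy2
        set x2 : Fin n → ℤ := (y1 - fun _ => 1) ⊔ x1 with hx2
        have hx1i : ∀ i, x1 i = min (x i) (y i + 1) := fun i => rfl
        have hy1i : ∀ i, y1 i = max (x i - 1) (y i) := fun i => rfl
        have hy2i : ∀ i, y2 i = min (y1 i) (x1 i + 1) := fun i => rfl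
        have hx2i : ∀ i, x2 i = max (y1 i - 1) (x1 i) := fun i => rfl
        have hNZ : (2 : ℤ) ≤ (N : ℤ) := by exact_mod_cast hN
        have hsum : ∀ i, x2 i + y2 i = x i + y i := by
          intro i
          rw [hx2i, hy2i, hx1i, hy1i]
          simp only [min_def, max_def]
          split_ifs <;> omega
        have hb2 : ∀ i, x2 i - y2 i ≤ ((N - 1 : ℕ) : ℤ) ∧ y2 i - x2 i ≤ ((N - 1 : ℕ) : ℤ) := by
          intro i
          have h := hb i
          have hc : ((N - 1 : ℕ) : ℤ) = (N : ℤ) - 1 := by omega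
          rw [hx2i, hy2i, hx1i, hy1i, hc]
          simp only [min_def, max_def]
          split_ifs <;> omega
        have hmid := ih (N - 1) (by omega) x2 y2 hb2
        have e1 : (fun i => (x2 i + y2 i) / 2) = (fun i => (x i + y i) / 2) := by
          funext i; rw [hsum i]
        have e2 : (fun i => -((-(x2 i + y2 i)) / 2)) = (fun i => -((-(x i + y i)) / 2)) := by
          funext i; rw [hsum i]
        rw [e1, e2] at hmid
        have k1 := key x y
        have k2 := key y1 x1
        calc f (fun i => (x i + y i) / 2) + f (fun i => -((-(x i + y i)) / 2))
            ≤ f x2 + f y2 := hmid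
          _ = f y2 + f x2 := add_comm _ _
          _ ≤ f y1 + f x1 := k2
          _ = f x1 + f y1 := add_comm _ _
          _ ≤ f x + f y := k1
  intro x y
  obtain ⟨N, hNb⟩ : ∃ N : ℕ, ∀ i, x i - y i ≤ (N : ℤ) ∧ y i - x i ≤ (N : ℤ) := by
    refine ⟨Finset.univ.sup fun i => (x i - y i).natAbs, fun i => ?_⟩
    have h := Finset.le_sup (f := fun i => (x i - y i).natAbs) (Finset.mem_univ i)
    omega
  exact main N x y hNb
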